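/- Let H be a real Hilbert space, E a nonempty closed convex subset of H, and f : E × E → ℝ a bifunction satisfying conditions (A1)–(A4). Let S : H → H be an (α, β)-generalized hybrid mapping such that F(S) ∩ EP(f) ≠ ∅. Let a ∈ (0,1] and let {α_n} be a sequence with 0 < a ≤ α_n ≤ 1 for all n, let {r_n} ⊂ (0,∞) satisfy liminf_{n→∞} r_n > 0, and let {β_n} be a sequence in [b,1] for some b ∈ (0,1) with liminf_{n→∞} β_n(1−β_n) > 0. Let x_1 = x ∈ H and let {x_n} ⊂ H, {u_n} ⊂ E, {y_n} ⊂ H satisfy, for all n ∈ ℕ: f(u_n, y) + (1/r_n)⟨y − u_n, u_n − x_n⟩ ≥ 0 for all y ∈ E; y_n = (1−β_n)x_n + β_n S u_n; and x_{n+1} = (1−α_n)x_n + α_n S y_n. Then {x_n} converges weakly to a point v ∈ F(S) ∩ EP(f), and moreover v = lim_{n→∞} P_{F(S)∩EP(f)}(x_n), where P_{F(S)∩EP(f)} denotes the metric projection of H onto F(S) ∩ EP(f). -/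

import Mathlib

open Filter RealInnerProductSpace
open scoped Topology

set_option linter.unusedSectionVars false
set_option maxHeartbeats 1000000

section Aux
variable {F : Type*} [NormedAddCommGroup F] [InnerProductSpace ℝ F] [CompleteSpace F]

lemma normCombo (p q : F) (t : ℝ) :
    ‖(1 - t) • p + t • q‖ ^ 2 = (1 - t) * ‖p‖ ^ 2 + t * ‖q‖ ^ 2 - t * (1 - t) * ‖p - q‖ ^ 2 := by
  have h1 := norm_add_sq_real ((1 - t) • p) (t • q)
  have h2 := norm_sub_sq_real p q
  rw [real_inner_smul_left, real_inner_smul_right] at h1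
  rw [norm_smul, norm_smul, Real.norm_eq_abs, Real.norm_eq_abs, mul_pow, mul_pow, sq_abs, sq_abs] at h1
  rw [h1]; ring_nf; nlinarith [h2]

lemma norm_le_of_sq_le_sq {s t : F} (h : ‖s‖ ^ 2 ≤ ‖t‖ ^ 2) : ‖s‖ ≤ ‖t‖ := by
  have := Real.sqrt_le_sqrt h
  rwa [Real.sqrt_sq (norm_nonneg _), Real.sqrt_sq (norm_nonneg _)] at this

lemma ultraLimit (g : ℕ → ℝ) (R : ℝ) (hg : ∀ n, |g n| ≤ R) (U : Ultrafilter ℕ) :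
    ∃ c, |c| ≤ R ∧ Tendsto g U (𝓝 c) := by
  have hmem : ↑(U.map g) ≤ 𝓟 (Set.Icc (-R) R) := by
    rw [le_principal_iff]
    exact Filter.mem_map.mpr (Filter.Eventually.of_forall fun n => abs_le.mp (hg n))
  obtain ⟨c, hc, hle⟩ := (isCompact_Icc (a := -R) (b := R)).ultrafilter_le_nhds (U.map g) hmem
  exact ⟨c, abs_le.mpr hc, hle⟩

lemma weakClosed (C : Set F) (hCcl : IsClosed C) (hCco : Convex ℝ C)
    (l : Filter ℕ) [l.NeBot] (z : ℕ → F) (hz : ∀ᶠ n in l, z n ∈ C) (v : F)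
    (hv : ∀ w, Tendsto (fun n => ⟪z n, w⟫) l (𝓝 ⟪v, w⟫)) : v ∈ C := by
  have hCne : C.Nonempty := by
    obtain ⟨n, hn⟩ := hz.exists; exact ⟨z n, hn⟩
  obtain ⟨p, hpC, hpmin⟩ := exists_norm_eq_iInf_of_complete_convex hCne hCcl.isComplete hCco v
  have hchar := (norm_eq_iInf_iff_real_inner_le_zero hCco hpC).mp hpmin
  have hev : ∀ᶠ n in l, ⟪z n, v - p⟫ ≤ ⟪p, v - p⟫ := by
    filter_upwards [hz] with n hn
    have := hchar (z n) hn
    rw [inner_sub_right] at this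
    have hcomm : ⟪v - p, z n⟫ = ⟪z n, v - p⟫ := real_inner_comm _ _
    have hcomm2 : ⟪v - p, p⟫ = ⟪p, v - p⟫ := real_inner_comm _ _
    linarith
  have hle : ⟪v, v - p⟫ ≤ ⟪p, v - p⟫ := le_of_tendsto (hv (v - p)) hev
  have : (⟪v - p, v - p⟫ : ℝ) ≤ 0 := by
    rw [inner_sub_left]; linarith
  have : v - p = 0 := by rwa [real_inner_self_nonpos] at this
  rw [sub_eq_zero] at this; rwa [this]

lemma sublevelClosed (E : Set F) (hEcl : IsClosed E) (g : F → ℝ)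
    (hg : LowerSemicontinuousOn g E) (c : ℝ) : IsClosed {z ∈ E | g z ≤ c} := by
  rw [← isSeqClosed_iff_isClosed]
  intro zs zl hzs hzl
  have hE : zl ∈ E := hEcl.isSeqClosed (fun n => (hzs n).1) hzl
  refine ⟨hE, ?_⟩
  by_contra hgt
  push_neg at hgt
  have hlsc := hg zl hE c hgt
  rw [eventually_nhdsWithin_iff] at hlsc
  have : Tendsto zs atTop (𝓝 zl) := hzl
  have hev := this.eventually hlsc
  obtain ⟨n, hn⟩ := hev.exists
  exact absurd (hzs n).2 (not_le.mpr (hn (hzs n).1))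

end Aux

theorem stmt_0
    {H : Type*} [NormedAddCommGroup H] [InnerProductSpace ℝ H] [CompleteSpace H]
    (E : Set H) (hEne : E.Nonempty) (hEcl : IsClosed E) (hEco : Convex ℝ E)
    (f : H → H → ℝ)
    (hA1 : ∀ x ∈ E, f x x = 0)
    (hA2 : ∀ x ∈ E, ∀ y ∈ E, f x y + f y x ≤ 0)
    (hA3 : ∀ x ∈ E, ∀ y ∈ E, ∀ z ∈ E,
      Filter.limsup (fun t : ℝ => f (t • z + (1 - t) • x) y) (nhdsWithin 0 (Set.Ioi 0)) ≤ f x y)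
    (hA4c : ∀ x ∈ E, ConvexOn ℝ E (f x))
    (hA4l : ∀ x ∈ E, LowerSemicontinuousOn (f x) E)
    (S : H → H) (α β : ℝ)
    (hS : ∀ x y : H,
      α * ‖S x - S y‖ ^ 2 + (1 - α) * ‖x - S y‖ ^ 2 ≤
        β * ‖S x - y‖ ^ 2 + (1 - β) * ‖x - y‖ ^ 2)
    (K : Set H)
    (hK : K = {z : H | S z = z} ∩ {z ∈ E | ∀ w ∈ E, 0 ≤ f z w})
    (hKne : K.Nonempty)
    (a : ℝ) (ha : 0 < a) (ha1 : a ≤ 1)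
    (αs : ℕ → ℝ) (hαs : ∀ n, a ≤ αs n ∧ αs n ≤ 1)
    (r : ℕ → ℝ) (hr : ∀ n, 0 < r n) (hrinf : 0 < Filter.liminf r Filter.atTop)
    (b : ℝ) (hb : 0 < b) (hb1 : b < 1)
    (βs : ℕ → ℝ) (hβs : ∀ n, b ≤ βs n ∧ βs n ≤ 1)
    (hβinf : 0 < Filter.liminf (fun n => βs n * (1 - βs n)) Filter.atTop)
    (x u y : ℕ → H)
    (hu : ∀ n, u n ∈ E)
    (hueq : ∀ n, ∀ w ∈ E, 0 ≤ f (u n) w + (1 / r n) * ⟪w - u n, u n - x n⟫)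
    (hy : ∀ n, y n = (1 - βs n) • x n + βs n • S (u n))
    (hx : ∀ n, x (n + 1) = (1 - αs n) • x n + αs n • S (y n)) :
    ∃ v ∈ K,
      (∀ w : H, Filter.Tendsto (fun n => ⟪x n, w⟫) Filter.atTop (𝓝 ⟪v, w⟫)) ∧
      ∃ p : ℕ → H,
        (∀ n, p n ∈ K ∧ ∀ w ∈ K, ‖x n - p n‖ ≤ ‖x n - w‖) ∧
        Filter.Tendsto p Filter.atTop (𝓝 v) := by
  classical
  -- basic facts about K
  have hKfix : ∀ q ∈ K, S q = q := fun q hq => ((hK ▸ hq).1 : _)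
  have hKE : ∀ q ∈ K, q ∈ E := fun q hq => (hK ▸ hq).2.1
  have hKEP : ∀ q ∈ K, ∀ w ∈ E, 0 ≤ f q w := fun q hq => (hK ▸ hq).2.2
  obtain ⟨q₀, hq₀⟩ := hKne
  -- quasi-nonexpansiveness
  have quasi : ∀ q : H, S q = q → ∀ z : H, ‖S z - q‖ ^ 2 ≤ ‖z - q‖ ^ 2 := by
    intro q hq z
    have h := hS q z
    rw [hq, norm_sub_rev q (S z), norm_sub_rev q z] at h
    nlinarith [h]
  -- Minty-type lemma
  have minty : ∀ v ∈ E, (∀ w ∈ E, f w v ≤ 0) → ∀ w ∈ E, 0 ≤ f v w := by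
    intro v hvE hfw w hw
    have h3 := hA3 v hvE w hw w hw
    set g : ℝ → ℝ := fun t => f (t • w + (1 - t) • v) w with hg
    have hpos : ∀ t : ℝ, t ∈ Set.Ioo (0:ℝ) 1 → 0 ≤ g t := by
      rintro t ⟨ht0, ht1⟩
      set z := t • w + (1 - t) • v with hz
      have hzE : z ∈ E := hEco hw hvE ht0.le (by linarith) (by ring)
      have h0 : f z z = 0 := hA1 z hzE
      have hconv := (hA4c z hzE).2 hw hvE ht0.le (by linarith : (0:ℝ) ≤ 1 - t) (by ring)
      rw [← hz, h0] at hconv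
      simp only [smul_eq_mul] at hconv
      have hneg : f z v ≤ 0 := hfw z hzE
      have h5 : (1 - t) * f z v ≤ 0 :=
        mul_nonpos_iff.mpr (Or.inl ⟨by linarith, hneg⟩)
      have hmul : 0 ≤ t * f z w := by linarith
      have hdiv := div_nonneg hmul ht0.le
      rwa [mul_comm t (f z w), mul_div_assoc, div_self (ne_of_gt ht0), mul_one] at hdiv
    by_cases hbd : IsBoundedUnder (· ≤ ·) (𝓝[>] (0:ℝ)) g
    · refine le_trans (le_limsup_of_frequently_le ?_ hbd) h3
      have hev : ∀ᶠ t in 𝓝[>] (0:ℝ), 0 ≤ g t := by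
        filter_upwards [Ioo_mem_nhdsGT_of_mem (Set.left_mem_Ico.mpr zero_lt_one)] with t ht
        exact hpos t ht
      exact hev.frequently
    · have hempty : {a : ℝ | ∀ᶠ t in 𝓝[>] (0:ℝ), g t ≤ a} = ∅ := by
        rw [Set.eq_empty_iff_forall_notMem]
        intro a hamem
        exact hbd ⟨a, by rwa [eventually_map]⟩
      have hls : limsup g (𝓝[>] (0:ℝ)) = 0 := by
        rw [Filter.limsup_eq, hempty, Real.sInf_empty]
      rw [hls] at h3
      exact h3
  -- K is closed and convex
  -- fixed point set is closed and convex
  have hFcl : IsClosed {z : H | S z = z} := by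
    apply isClosed_of_closure_subset
    intro z hz
    have hnorm : ∀ ε : ℝ, 0 < ε → ‖S z - z‖ < 2 * ε := by
      intro ε hε
      obtain ⟨w, hwF, hwd⟩ := Metric.mem_closure_iff.mp hz ε hε
      have h1 : ‖S z - w‖ ≤ ‖z - w‖ := norm_le_of_sq_le_sq (quasi w hwF z)
      rw [dist_eq_norm] at hwd
      calc ‖S z - z‖ = ‖(S z - w) + (w - z)‖ := by rw [sub_add_sub_cancel]
      _ ≤ ‖S z - w‖ + ‖w - z‖ := norm_add_le _ _
      _ ≤ ‖z - w‖ + ‖w - z‖ := by linarith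
      _ = ‖z - w‖ + ‖z - w‖ := by rw [norm_sub_rev w z]
      _ < 2 * ε := by linarith
    have hle : ‖S z - z‖ ≤ 0 := by
      by_contra hpos
      push_neg at hpos
      have := hnorm (‖S z - z‖ / 4) (by linarith)
      linarith
    show S z = z
    have : ‖S z - z‖ = 0 := le_antisymm hle (norm_nonneg _)
    rw [norm_eq_zero, sub_eq_zero] at this
    exact this
  have hFco : Convex ℝ {z : H | S z = z} := by
    intro z1 h1 z2 h2 s t hs ht hst
    have hs1 : s = 1 - t := by linarith
    subst hs1
    set m := (1 - t) • z1 + t • z2 with hm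
    have e : S m - m = (1 - t) • (S m - z1) + t • (S m - z2) := by
      rw [hm]; module
    have hq1 : ‖S m - z1‖ ^ 2 ≤ ‖m - z1‖ ^ 2 := quasi z1 h1 m
    have hq2 : ‖S m - z2‖ ^ 2 ≤ ‖m - z2‖ ^ 2 := quasi z2 h2 m
    have em1 : m - z1 = t • (z2 - z1) := by rw [hm]; module
    have em2 : m - z2 = (1 - t) • (z1 - z2) := by rw [hm]; module
    have en1 : ‖m - z1‖ ^ 2 = t ^ 2 * ‖z2 - z1‖ ^ 2 := by
      rw [em1, norm_smul, Real.norm_eq_abs, mul_pow, sq_abs]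
    have en2 : ‖m - z2‖ ^ 2 = (1 - t) ^ 2 * ‖z1 - z2‖ ^ 2 := by
      rw [em2, norm_smul, Real.norm_eq_abs, mul_pow, sq_abs]
    have hid : ‖S m - m‖ ^ 2 = (1 - t) * ‖S m - z1‖ ^ 2 + t * ‖S m - z2‖ ^ 2
        - t * (1 - t) * ‖z1 - z2‖ ^ 2 := by
      rw [e, normCombo]
      have hd : (S m - z1) - (S m - z2) = z2 - z1 := by abel
      rw [hd, norm_sub_rev z2 z1]
    have hzz : ‖z2 - z1‖ = ‖z1 - z2‖ := norm_sub_rev _ _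
    rw [en1, hzz] at hq1
    rw [en2] at hq2
    have key2 : ‖S m - m‖ ^ 2 ≤ 0 := by
      nlinarith [mul_le_mul_of_nonneg_left hq1 hs, mul_le_mul_of_nonneg_left hq2 ht,
        sq_nonneg ‖z1 - z2‖]
    have : ‖S m - m‖ ^ 2 = 0 := le_antisymm key2 (sq_nonneg _)
    have : S m - m = 0 := by
      rwa [pow_eq_zero_iff (two_ne_zero), norm_eq_zero, sub_eq_zero,
        ← sub_eq_zero (a := S m)] at this
    show S m = m
    rwa [sub_eq_zero] at this
  -- equilibrium point set is closed and convex
  have hEPeq : {z | z ∈ E ∧ ∀ w ∈ E, 0 ≤ f z w} = ⋂ w ∈ E, {z ∈ E | f w z ≤ 0} := by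
    ext z
    simp only [Set.mem_setOf_eq, Set.mem_iInter]
    constructor
    · rintro ⟨hzE, hzEP⟩ w hw
      exact ⟨hzE, by linarith [hA2 w hw z hzE, hzEP w hw]⟩
    · intro hall
      obtain ⟨w₀, hw₀⟩ := hEne
      have hzE : z ∈ E := (hall w₀ hw₀).1
      exact ⟨hzE, minty z hzE (fun w hw => (hall w hw).2)⟩
  have hEPcl : IsClosed {z | z ∈ E ∧ ∀ w ∈ E, 0 ≤ f z w} := by
    rw [hEPeq]
    exact isClosed_biInter fun w hw => sublevelClosed E hEcl (f w) (hA4l w hw) 0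
  have hEPco : Convex ℝ {z | z ∈ E ∧ ∀ w ∈ E, 0 ≤ f z w} := by
    rw [hEPeq]
    exact convex_iInter₂ fun w hw => (hA4c w hw).convex_le 0
  have hKcl : IsClosed K := by rw [hK]; exact hFcl.inter hEPcl
  have hKco : Convex ℝ K := by rw [hK]; exact hFco.inter hEPco
  -- the resolvent inequality
  have inner_uq : ∀ q ∈ K, ∀ n, 0 ≤ (⟪q - u n, u n - x n⟫ : ℝ) := by
    intro q hq n
    have h1 := hueq n q (hKE q hq)
    have h2 := hA2 (u n) (hu n) q (hKE q hq)
    have h3 := hKEP q hq (u n) (hu n)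
    have h4 : 0 ≤ (1 / r n) * ⟪q - u n, u n - x n⟫ := by linarith
    nlinarith [one_div_pos.mpr (hr n), h4]
  have u_le : ∀ q ∈ K, ∀ n, ‖u n - q‖ ^ 2 + ‖u n - x n‖ ^ 2 ≤ ‖x n - q‖ ^ 2 := by
    intro q hq n
    have hexp : ‖x n - q‖ ^ 2 =
        ‖x n - u n‖ ^ 2 + 2 * ⟪x n - u n, u n - q⟫ + ‖u n - q‖ ^ 2 := by
      rw [show x n - q = (x n - u n) + (u n - q) by abel]
      exact norm_add_sq_real _ _
    have e : (⟪x n - u n, u n - q⟫ : ℝ) = ⟪q - u n, u n - x n⟫ := by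
      rw [real_inner_comm, show u n - x n = -(x n - u n) from (neg_sub _ _).symm,
        show q - u n = -(u n - q) from (neg_sub _ _).symm, inner_neg_neg]
    have := inner_uq q hq n
    rw [norm_sub_rev (x n) (u n)] at hexp
    nlinarith [hexp, e]
  -- master inequality
  have master : ∀ q ∈ K, ∀ n,
      ‖x (n + 1) - q‖ ^ 2 + (a * b) * ‖u n - x n‖ ^ 2
        + a * (βs n * (1 - βs n)) * ‖x n - S (u n)‖ ^ 2 ≤ ‖x n - q‖ ^ 2 := by
    intro q hq n
    obtain ⟨han, han1⟩ := hαs n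
    obtain ⟨hbn, hbn1⟩ := hβs n
    have han0 : (0:ℝ) ≤ αs n := le_trans ha.le han
    have hbn0 : (0:ℝ) ≤ βs n := le_trans hb.le hbn
    have h1 : ‖y n - q‖ ^ 2 = (1 - βs n) * ‖x n - q‖ ^ 2 + βs n * ‖S (u n) - q‖ ^ 2
        - βs n * (1 - βs n) * ‖x n - S (u n)‖ ^ 2 := by
      have e : y n - q = (1 - βs n) • (x n - q) + βs n • (S (u n) - q) := by
        rw [hy n]; module
      rw [e, normCombo, sub_sub_sub_cancel_right]
    have h2 : ‖S (u n) - q‖ ^ 2 ≤ ‖u n - q‖ ^ 2 := quasi q (hKfix q hq) (u n)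
    have h3 := u_le q hq n
    have h4 : ‖x (n + 1) - q‖ ^ 2 ≤ (1 - αs n) * ‖x n - q‖ ^ 2 + αs n * ‖y n - q‖ ^ 2 := by
      have e : x (n + 1) - q = (1 - αs n) • (x n - q) + αs n • (S (y n) - q) := by
        rw [hx n]; module
      have hq2 : ‖S (y n) - q‖ ^ 2 ≤ ‖y n - q‖ ^ 2 := quasi q (hKfix q hq) (y n)
      have e2 : ‖x (n + 1) - q‖ ^ 2 = (1 - αs n) * ‖x n - q‖ ^ 2 + αs n * ‖S (y n) - q‖ ^ 2
          - αs n * (1 - αs n) * ‖x n - S (y n)‖ ^ 2 := by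
        rw [e, normCombo, sub_sub_sub_cancel_right]
      nlinarith [mul_nonneg (mul_nonneg han0 (by linarith : (0:ℝ) ≤ 1 - αs n)) (sq_nonneg ‖x n - S (y n)‖), mul_le_mul_of_nonneg_left hq2 han0]
    have step5 : ‖y n - q‖ ^ 2 ≤ ‖x n - q‖ ^ 2 - βs n * ‖u n - x n‖ ^ 2
        - βs n * (1 - βs n) * ‖x n - S (u n)‖ ^ 2 := by
      nlinarith [mul_le_mul_of_nonneg_left h2 hbn0,
        mul_le_mul_of_nonneg_left h3 hbn0]
    have step6 : ‖x (n + 1) - q‖ ^ 2 ≤ ‖x n - q‖ ^ 2 - (αs n * βs n) * ‖u n - x n‖ ^ 2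
        - (αs n * (βs n * (1 - βs n))) * ‖x n - S (u n)‖ ^ 2 := by
      nlinarith [mul_le_mul_of_nonneg_left step5 han0]
    have c1 : a * b ≤ αs n * βs n := mul_le_mul han hbn hb.le han0
    have c2 : a * (βs n * (1 - βs n)) ≤ αs n * (βs n * (1 - βs n)) :=
      mul_le_mul_of_nonneg_right han
        (mul_nonneg hbn0 (by linarith))
    nlinarith [mul_le_mul_of_nonneg_right c1 (sq_nonneg ‖u n - x n‖),
      mul_le_mul_of_nonneg_right c2 (sq_nonneg ‖x n - S (u n)‖)]
  -- monotonicity and limits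
  have hmono2 : ∀ q ∈ K, Antitone fun n => ‖x n - q‖ ^ 2 := by
    intro q hq
    apply antitone_nat_of_succ_le
    intro n
    have hm := master q hq n
    have h1 : 0 ≤ (a * b) * ‖u n - x n‖ ^ 2 := by positivity
    have h2 : 0 ≤ a * (βs n * (1 - βs n)) * ‖x n - S (u n)‖ ^ 2 := by
      have hβnn : 0 ≤ βs n * (1 - βs n) :=
        mul_nonneg (by linarith [(hβs n).1]) (by linarith [(hβs n).2])
      exact mul_nonneg (mul_nonneg ha.le hβnn) (sq_nonneg _)
    linarith
  have hLim : ∀ q ∈ K, Tendsto (fun n => ‖x n - q‖ ^ 2) atTop (𝓝 (⨅ n, ‖x n - q‖ ^ 2)) := by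
    intro q hq
    exact tendsto_atTop_ciInf (hmono2 q hq) ⟨0, by rintro _ ⟨n, rfl⟩; positivity⟩
  -- vanishing differences
  have hdiff0 : ∀ q ∈ K, Tendsto (fun n => ‖x n - q‖ ^ 2 - ‖x (n + 1) - q‖ ^ 2) atTop (𝓝 0) := by
    intro q hq
    have h1 := hLim q hq
    have h2 : Tendsto (fun n => ‖x (n + 1) - q‖ ^ 2) atTop (𝓝 (⨅ n, ‖x n - q‖ ^ 2)) :=
      h1.comp (tendsto_add_atTop_nat 1)
    simpa using h1.sub h2
  have hux : Tendsto (fun n => ‖u n - x n‖) atTop (𝓝 0) := by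
    have hsq : Tendsto (fun n => ‖u n - x n‖ ^ 2) atTop (𝓝 0) := by
      have hbd := (hdiff0 q₀ hq₀).const_mul (1 / (a * b))
      rw [mul_zero] at hbd
      apply squeeze_zero (fun n => sq_nonneg _) _ hbd
      intro n
      have hm := master q₀ hq₀ n
      have h2 : 0 ≤ a * (βs n * (1 - βs n)) * ‖x n - S (u n)‖ ^ 2 := by
        have hβnn : 0 ≤ βs n * (1 - βs n) :=
          mul_nonneg (by linarith [(hβs n).1]) (by linarith [(hβs n).2])
        exact mul_nonneg (mul_nonneg ha.le hβnn) (sq_nonneg _)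
      have hab : 0 < a * b := mul_pos ha hb
      have hstep : a * b * ‖u n - x n‖ ^ 2 ≤ ‖x n - q₀‖ ^ 2 - ‖x (n+1) - q₀‖ ^ 2 := by linarith
      show ‖u n - x n‖ ^ 2 ≤ 1 / (a * b) * (‖x n - q₀‖ ^ 2 - ‖x (n + 1) - q₀‖ ^ 2)
      calc ‖u n - x n‖ ^ 2 = (1 / (a * b)) * (a * b * ‖u n - x n‖ ^ 2) := by
            field_simp
      _ ≤ 1 / (a * b) * (‖x n - q₀‖ ^ 2 - ‖x (n + 1) - q₀‖ ^ 2) := by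
            apply mul_le_mul_of_nonneg_left hstep (by positivity)
    have := hsq.sqrt
    rw [Real.sqrt_zero] at this
    refine this.congr fun n => ?_
    rw [Real.sqrt_sq (norm_nonneg _)]
  have hSux : Tendsto (fun n => ‖x n - S (u n)‖) atTop (𝓝 0) := by
    set c := Filter.liminf (fun n => βs n * (1 - βs n)) atTop with hc
    have hbdd : IsBoundedUnder (· ≥ ·) atTop (fun n => βs n * (1 - βs n)) :=
      Filter.isBoundedUnder_of ⟨0, fun n =>
        mul_nonneg (by linarith [(hβs n).1]) (by linarith [(hβs n).2])⟩
    have hev : ∀ᶠ n in atTop, c / 2 < βs n * (1 - βs n) :=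
      eventually_lt_of_lt_liminf (by linarith [hβinf] : c / 2 < c) hbdd
    have hsq : Tendsto (fun n => ‖x n - S (u n)‖ ^ 2) atTop (𝓝 0) := by
      have hbd := (hdiff0 q₀ hq₀).const_mul (1 / (a * (c / 2)))
      rw [mul_zero] at hbd
      apply squeeze_zero' (Filter.Eventually.of_forall fun n => sq_nonneg _) _ hbd
      filter_upwards [hev] with n hn
      show ‖x n - S (u n)‖ ^ 2 ≤ 1 / (a * (c / 2)) * (‖x n - q₀‖ ^ 2 - ‖x (n + 1) - q₀‖ ^ 2)
      have hm := master q₀ hq₀ n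
      have h1 : 0 ≤ (a * b) * ‖u n - x n‖ ^ 2 := by positivity
      have hac : 0 < a * (c / 2) := by
        have : 0 < c := hβinf
        positivity
      have h3 : a * (c / 2) * ‖x n - S (u n)‖ ^ 2
          ≤ a * (βs n * (1 - βs n)) * ‖x n - S (u n)‖ ^ 2 := by
        apply mul_le_mul_of_nonneg_right _ (sq_nonneg _)
        exact mul_le_mul_of_nonneg_left hn.le ha.le
      have hkey : a * (c / 2) * ‖x n - S (u n)‖ ^ 2
          ≤ ‖x n - q₀‖ ^ 2 - ‖x (n + 1) - q₀‖ ^ 2 := by linarith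
      calc ‖x n - S (u n)‖ ^ 2
          = (1 / (a * (c / 2))) * (a * (c / 2) * ‖x n - S (u n)‖ ^ 2) := by
            field_simp
      _ ≤ 1 / (a * (c / 2)) * (‖x n - q₀‖ ^ 2 - ‖x (n + 1) - q₀‖ ^ 2) := by
            apply mul_le_mul_of_nonneg_left hkey (by positivity)
    have := hsq.sqrt
    rw [Real.sqrt_zero] at this
    refine this.congr fun n => ?_
    rw [Real.sqrt_sq (norm_nonneg _)]
  have hSuu : Tendsto (fun n => ‖S (u n) - u n‖) atTop (𝓝 0) := by
    have h := hSux.add hux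
    rw [add_zero] at h
    apply squeeze_zero_norm _ h
    intro n
    rw [Real.norm_eq_abs, abs_of_nonneg (norm_nonneg _)]
    calc ‖S (u n) - u n‖ = ‖(S (u n) - x n) + (x n - u n)‖ := by rw [sub_add_sub_cancel]
    _ ≤ ‖S (u n) - x n‖ + ‖x n - u n‖ := norm_add_le _ _
    _ = ‖x n - S (u n)‖ + ‖u n - x n‖ := by rw [norm_sub_rev (S (u n)) (x n), norm_sub_rev (x n) (u n)]
  -- boundedness
  set R : ℝ := ‖x 0 - q₀‖ + ‖q₀‖ with hR
  have hxq0 : ∀ n, ‖x n - q₀‖ ≤ ‖x 0 - q₀‖ := fun n =>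
    norm_le_of_sq_le_sq (hmono2 q₀ hq₀ (Nat.zero_le n))
  have hxB : ∀ n, ‖x n‖ ≤ R := by
    intro n
    calc ‖x n‖ = ‖(x n - q₀) + q₀‖ := by rw [sub_add_cancel]
    _ ≤ ‖x n - q₀‖ + ‖q₀‖ := norm_add_le _ _
    _ ≤ R := by have := hxq0 n; rw [hR]; linarith
  have huB : ∀ n, ‖u n‖ ≤ R := by
    intro n
    have h1 : ‖u n - q₀‖ ^ 2 ≤ ‖x n - q₀‖ ^ 2 := by
      have := u_le q₀ hq₀ n; nlinarith [sq_nonneg ‖u n - x n‖]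
    have h2 : ‖u n - q₀‖ ≤ ‖x n - q₀‖ := norm_le_of_sq_le_sq h1
    calc ‖u n‖ = ‖(u n - q₀) + q₀‖ := by rw [sub_add_cancel]
    _ ≤ ‖u n - q₀‖ + ‖q₀‖ := norm_add_le _ _
    _ ≤ R := by have := hxq0 n; rw [hR]; linarith
  -- key: along any ultrafilter finer than atTop there is a weak limit lying in K
  have key : ∀ U : Ultrafilter ℕ, ↑U ≤ (atTop : Filter ℕ) →
      ∃ v, v ∈ K ∧ ∀ w : H, Tendsto (fun n => ⟪x n, w⟫) U (𝓝 ⟪v, w⟫) := by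
    intro U hU
    -- construct the weak limit via the Riesz representation of the ultrafilter limit
    choose c hc1 hc2 using fun w : H => ultraLimit (fun n => ⟪x n, w⟫) (R * ‖w‖)
      (fun n => le_trans (abs_real_inner_le_norm _ _)
        (mul_le_mul_of_nonneg_right (hxB n) (norm_nonneg w))) U
    have hadd : ∀ w1 w2 : H, c (w1 + w2) = c w1 + c w2 := by
      intro w1 w2
      refine tendsto_nhds_unique (hc2 (w1 + w2)) ?_
      refine ((hc2 w1).add (hc2 w2)).congr fun n => ?_
      rw [inner_add_right]
    have hsmul : ∀ (t : ℝ) (w : H), c (t • w) = t * c w := by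
      intro t w
      refine tendsto_nhds_unique (hc2 (t • w)) ?_
      refine ((hc2 w).const_mul t).congr fun n => ?_
      rw [real_inner_smul_right]
    set φ : H →ₗ[ℝ] ℝ :=
      { toFun := c, map_add' := hadd, map_smul' := by intro t w; simpa using hsmul t w } with hφ
    have hφb : ∀ w : H, ‖φ w‖ ≤ R * ‖w‖ := fun w => by
      rw [Real.norm_eq_abs]; exact hc1 w
    set v := (InnerProductSpace.toDual ℝ H).symm (φ.mkContinuous R hφb) with hvdef
    have hvw : ∀ w : H, (⟪v, w⟫ : ℝ) = c w := by
      intro w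
      rw [hvdef, InnerProductSpace.toDual_symm_apply]
      rfl
    have hxv : ∀ w : H, Tendsto (fun n => (⟪x n, w⟫ : ℝ)) U (𝓝 ⟪v, w⟫) := by
      intro w; rw [hvw w]; exact hc2 w
    -- u also converges weakly to v along U
    have huv : ∀ w : H, Tendsto (fun n => (⟪u n, w⟫ : ℝ)) U (𝓝 ⟪v, w⟫) := by
      intro w
      have h0 : Tendsto (fun n => (⟪u n - x n, w⟫ : ℝ)) atTop (𝓝 0) := by
        have hb := hux.mul_const ‖w‖
        rw [zero_mul] at hb
        apply squeeze_zero_norm _ hb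
        intro n
        exact le_trans (abs_real_inner_le_norm _ _)
          (mul_le_mul_of_nonneg_right le_rfl (norm_nonneg w))
      have hsum := (hxv w).add (h0.mono_left hU)
      rw [add_zero] at hsum
      refine hsum.congr fun n => ?_
      rw [inner_sub_left]; ring
    have hvE : v ∈ E := weakClosed E hEcl hEco U u (Eventually.of_forall hu) v huv
    -- v is a fixed point of S
    have hvFix : S v = v := by
      set e : ℕ → H := fun n => S (u n) - u n with he
      have he0 : Tendsto (fun n => ‖e n‖) atTop (𝓝 0) := hSuu
      have hineq : ∀ n, ‖u n - S v‖ ^ 2 - ‖u n - v‖ ^ 2 ≤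
          β * (2 * ⟪u n - v, e n⟫ + ‖e n‖ ^ 2)
            - α * (2 * ⟪u n - S v, e n⟫ + ‖e n‖ ^ 2) := by
        intro n
        have h := hS (u n) v
        have e1 : ‖S (u n) - S v‖ ^ 2
            = ‖u n - S v‖ ^ 2 + 2 * ⟪u n - S v, e n⟫ + ‖e n‖ ^ 2 := by
          rw [show S (u n) - S v = (u n - S v) + e n by simp only [he]; abel]
          exact norm_add_sq_real _ _
        have e2 : ‖S (u n) - v‖ ^ 2
            = ‖u n - v‖ ^ 2 + 2 * ⟪u n - v, e n⟫ + ‖e n‖ ^ 2 := by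
          rw [show S (u n) - v = (u n - v) + e n by simp only [he]; abel]
          exact norm_add_sq_real _ _
        have e1' : α * ‖S (u n) - S v‖ ^ 2
            = α * (‖u n - S v‖ ^ 2 + 2 * ⟪u n - S v, e n⟫ + ‖e n‖ ^ 2) := by rw [e1]
        have e2' : β * ‖S (u n) - v‖ ^ 2
            = β * (‖u n - v‖ ^ 2 + 2 * ⟪u n - v, e n⟫ + ‖e n‖ ^ 2) := by rw [e2]
        nlinarith [h, e1', e2']
      have hip1 : Tendsto (fun n => (⟪u n - v, e n⟫ : ℝ)) atTop (𝓝 0) := by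
        have hb := he0.const_mul (R + ‖v‖)
        rw [mul_zero] at hb
        apply squeeze_zero_norm _ hb
        intro n
        refine le_trans (abs_real_inner_le_norm _ _) ?_
        apply mul_le_mul_of_nonneg_right _ (norm_nonneg _)
        calc ‖u n - v‖ ≤ ‖u n‖ + ‖v‖ := norm_sub_le _ _
        _ ≤ R + ‖v‖ := by linarith [huB n]
      have hip2 : Tendsto (fun n => (⟪u n - S v, e n⟫ : ℝ)) atTop (𝓝 0) := by
        have hb := he0.const_mul (R + ‖S v‖)
        rw [mul_zero] at hb
        apply squeeze_zero_norm _ hb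
        intro n
        refine le_trans (abs_real_inner_le_norm _ _) ?_
        apply mul_le_mul_of_nonneg_right _ (norm_nonneg _)
        calc ‖u n - S v‖ ≤ ‖u n‖ + ‖S v‖ := norm_sub_le _ _
        _ ≤ R + ‖S v‖ := by linarith [huB n]
      have hsq0 : Tendsto (fun n => ‖e n‖ ^ 2) atTop (𝓝 0) := by
        have := he0.mul he0
        rw [mul_zero] at this
        refine this.congr fun n => ?_
        ring
      have hcn : Tendsto (fun n => β * (2 * ⟪u n - v, e n⟫ + ‖e n‖ ^ 2)
          - α * (2 * ⟪u n - S v, e n⟫ + ‖e n‖ ^ 2)) atTop (𝓝 0) := by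
        have h1 := (((hip1.const_mul 2).add hsq0).const_mul β).sub
          (((hip2.const_mul 2).add hsq0).const_mul α)
        norm_num at h1
        exact h1
      have hlhs : ∀ n, ‖u n - S v‖ ^ 2 - ‖u n - v‖ ^ 2
          = ‖S v‖ ^ 2 - ‖v‖ ^ 2 - 2 * ⟪u n, S v - v⟫ := by
        intro n
        have a1 := norm_sub_sq_real (u n) (S v)
        have a2 := norm_sub_sq_real (u n) v
        have a3 : (⟪u n, S v - v⟫ : ℝ) = ⟪u n, S v⟫ - ⟪u n, v⟫ := inner_sub_right _ _ _
        linarith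
      have hUlim : Tendsto (fun n => ‖u n - S v‖ ^ 2 - ‖u n - v‖ ^ 2) U
          (𝓝 (‖S v‖ ^ 2 - ‖v‖ ^ 2 - 2 * ⟪v, S v - v⟫)) := by
        have hconst : Tendsto (fun _ : ℕ => ‖S v‖ ^ 2 - ‖v‖ ^ 2) (U : Filter ℕ)
            (𝓝 (‖S v‖ ^ 2 - ‖v‖ ^ 2)) := tendsto_const_nhds
        have := hconst.sub ((huv (S v - v)).const_mul 2)
        refine this.congr fun n => (hlhs n).symm
      have hfinal : ‖S v‖ ^ 2 - ‖v‖ ^ 2 - 2 * ⟪v, S v - v⟫ ≤ 0 :=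
        le_of_tendsto_of_tendsto' hUlim (hcn.mono_left hU) hineq
      have hsv : ‖S v - v‖ ^ 2 ≤ 0 := by
        have b1 := norm_sub_sq_real (S v) v
        have b2 := real_inner_self_eq_norm_sq v
        have b3 : (⟪v, S v - v⟫ : ℝ) = ⟪v, S v⟫ - ⟪v, v⟫ := inner_sub_right _ _ _
        have b4 : (⟪S v, v⟫ : ℝ) = ⟪v, S v⟫ := real_inner_comm _ _
        linarith
      have : ‖S v - v‖ ^ 2 = 0 := le_antisymm hsv (sq_nonneg _)
      rw [pow_eq_zero_iff (two_ne_zero), norm_eq_zero, sub_eq_zero] at this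
      exact this
    -- v solves the equilibrium problem
    have hvEP : ∀ w ∈ E, 0 ≤ f v w := by
      refine minty v hvE ?_
      intro w hw
      by_contra hgt
      push_neg at hgt
      set tt : ℕ → ℝ := fun n => (1 / r n) * ⟪w - u n, u n - x n⟫ with htt
      have htt0 : Tendsto tt atTop (𝓝 0) := by
        set l := Filter.liminf r atTop with hl
        have hrpos : ∀ᶠ n in atTop, l / 2 < r n :=
          eventually_lt_of_lt_liminf (by linarith)
            (Filter.isBoundedUnder_of ⟨0, fun n => (hr n).le⟩)
        have hb := (hux.const_mul (‖w‖ + R)).const_mul (2 / l)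
        rw [mul_zero, mul_zero] at hb
        apply squeeze_zero_norm' _ hb
        filter_upwards [hrpos] with n hn
        have hr2 : |1 / r n| ≤ 2 / l := by
          rw [abs_of_pos (one_div_pos.mpr (hr n)),
            show (2:ℝ) / l = 1 / (l / 2) by rw [one_div_div]]
          exact one_div_le_one_div_of_le (half_pos hrinf) hn.le
        have hip : |(⟪w - u n, u n - x n⟫ : ℝ)| ≤ (‖w‖ + R) * ‖u n - x n‖ := by
          refine le_trans (abs_real_inner_le_norm _ _) ?_
          apply mul_le_mul_of_nonneg_right _ (norm_nonneg _)
          calc ‖w - u n‖ ≤ ‖w‖ + ‖u n‖ := norm_sub_le _ _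
          _ ≤ ‖w‖ + R := by linarith [huB n]
        rw [htt]
        calc |1 / r n * ⟪w - u n, u n - x n⟫|
            = |1 / r n| * |(⟪w - u n, u n - x n⟫ : ℝ)| := abs_mul _ _
        _ ≤ (2 / l) * ((‖w‖ + R) * ‖u n - x n‖) := by
            apply mul_le_mul hr2 hip (abs_nonneg _)
            positivity
      have hfu : ∀ n, f w (u n) ≤ tt n := by
        intro n
        have h1 := hueq n w hw
        have h2 := hA2 (u n) (hu n) w hw
        rw [htt]
        linarith
      have hevent : ∀ᶠ n in (U : Filter ℕ), u n ∈ {z ∈ E | f w z ≤ f w v / 2} := by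
        have hev2 : ∀ᶠ n in atTop, tt n < f w v / 2 :=
          htt0.eventually_lt_const (by linarith)
        exact (hev2.filter_mono hU).mono fun n hn => ⟨hu n, le_trans (hfu n) hn.le⟩
      have hvC := weakClosed {z ∈ E | f w z ≤ f w v / 2}
        (sublevelClosed E hEcl (f w) (hA4l w hw) _) ((hA4c w hw).convex_le _)
        U u hevent v huv
      have : f w v ≤ f w v / 2 := hvC.2
      linarith
    exact ⟨v, by rw [hK]; exact ⟨hvFix, hvE, hvEP⟩, hxv⟩
  -- extract the weak limit along a fixed ultrafilter
  obtain ⟨v₀, hv₀K, hv₀w⟩ := key (Ultrafilter.of atTop) (Ultrafilter.of_le _)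
  -- uniqueness of the weak limit
  have uniq : ∀ (U : Ultrafilter ℕ), ↑U ≤ (atTop : Filter ℕ) → ∀ v', v' ∈ K →
      (∀ w : H, Tendsto (fun n => ⟪x n, w⟫) U (𝓝 ⟪v', w⟫)) → v' = v₀ := by
    intro U hU v' hv'K hv'w
    have hid : ∀ (q1 q2 : H) (n : ℕ), ‖x n - q2‖ ^ 2 - ‖x n - q1‖ ^ 2
        = ‖q2‖ ^ 2 - ‖q1‖ ^ 2 - 2 * ⟪x n, q2 - q1⟫ := by
      intro q1 q2 n
      have a1 := norm_sub_sq_real (x n) q2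
      have a2 := norm_sub_sq_real (x n) q1
      have a3 : (⟪x n, q2 - q1⟫ : ℝ) = ⟪x n, q2⟫ - ⟪x n, q1⟫ := inner_sub_right _ _ _
      linarith
    have hgen : ∀ (U' : Ultrafilter ℕ), ↑U' ≤ (atTop : Filter ℕ) → ∀ vv : H,
        (∀ w : H, Tendsto (fun n => (⟪x n, w⟫ : ℝ)) U' (𝓝 ⟪vv, w⟫)) →
        (⨅ n, ‖x n - v₀‖ ^ 2) - (⨅ n, ‖x n - v'‖ ^ 2)
          = ‖v₀‖ ^ 2 - ‖v'‖ ^ 2 - 2 * ⟪vv, v₀ - v'⟫ := by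
      intro U' hU' vv hvv
      have t1 : Tendsto (fun n => ‖x n - v₀‖ ^ 2 - ‖x n - v'‖ ^ 2) U'
          (𝓝 ((⨅ n, ‖x n - v₀‖ ^ 2) - (⨅ n, ‖x n - v'‖ ^ 2))) :=
        ((hLim v₀ hv₀K).mono_left hU').sub ((hLim v' hv'K).mono_left hU')
      have t2 : Tendsto (fun n => ‖x n - v₀‖ ^ 2 - ‖x n - v'‖ ^ 2) U'
          (𝓝 (‖v₀‖ ^ 2 - ‖v'‖ ^ 2 - 2 * ⟪vv, v₀ - v'⟫)) := by
        have hconst : Tendsto (fun _ : ℕ => ‖v₀‖ ^ 2 - ‖v'‖ ^ 2) (U' : Filter ℕ)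
            (𝓝 (‖v₀‖ ^ 2 - ‖v'‖ ^ 2)) := tendsto_const_nhds
        have := hconst.sub ((hvv (v₀ - v')).const_mul 2)
        refine this.congr fun n => (hid v' v₀ n).symm
      exact tendsto_nhds_unique t1 t2
    have h1 := hgen U hU v' hv'w
    have h2 := hgen (Ultrafilter.of atTop) (Ultrafilter.of_le _) v₀ hv₀w
    have h3 : (⟪v₀ - v', v₀ - v'⟫ : ℝ) = 0 := by
      have e1 : (⟪v₀, v₀ - v'⟫ : ℝ) = ⟪v', v₀ - v'⟫ := by linarith
      rw [inner_sub_left]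
      linarith
    have h4 : v₀ - v' = 0 := by rwa [inner_self_eq_zero] at h3
    rw [sub_eq_zero] at h4
    exact h4.symm
  -- weak convergence of the whole sequence
  have hweak : ∀ w : H, Tendsto (fun n => ⟪x n, w⟫) atTop (𝓝 ⟪v₀, w⟫) := by
    intro w
    rw [Filter.tendsto_iff_ultrafilter]
    intro U hU
    obtain ⟨v', hv'K, hv'w⟩ := key U hU
    rw [← uniq U hU v' hv'K hv'w]
    exact hv'w w
  -- the projection sequence
  have hproj := fun z : H => exists_norm_eq_iInf_of_complete_convex ⟨q₀, hq₀⟩ hKcl.isComplete hKco z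
  choose P hPK hPmin using hproj
  have hPle : ∀ z : H, ∀ w ∈ K, ‖z - P z‖ ≤ ‖z - w‖ := by
    intro z w hw
    rw [hPmin z]
    exact ciInf_le (f := fun w : ↥K => ‖z - (w : H)‖)
      ⟨0, Set.forall_mem_range.2 fun _ => norm_nonneg _⟩ ⟨w, hw⟩
  have hPchar : ∀ z : H, ∀ w ∈ K, (⟪z - P z, w - P z⟫ : ℝ) ≤ 0 := fun z =>
    (norm_eq_iInf_iff_real_inner_le_zero hKco (hPK z)).mp (hPmin z)
  set p : ℕ → H := fun n => P (x n) with hp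
  have hFejer : ∀ q ∈ K, ∀ m n : ℕ, n ≤ m → ‖x m - q‖ ≤ ‖x n - q‖ := by
    intro q hq m n hnm
    exact norm_le_of_sq_le_sq (hmono2 q hq hnm)
  have hdmono : ∀ m n : ℕ, n ≤ m → ‖x m - p m‖ ≤ ‖x n - p n‖ := by
    intro m n hnm
    calc ‖x m - p m‖ ≤ ‖x m - p n‖ := hPle (x m) (p n) (hPK (x n))
    _ ≤ ‖x n - p n‖ := hFejer (p n) (hPK (x n)) m n hnm
  have hd2 : Tendsto (fun n => ‖x n - p n‖ ^ 2) atTop (𝓝 (⨅ n, ‖x n - p n‖ ^ 2)) :=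
    tendsto_atTop_ciInf (fun n m hnm => pow_le_pow_left₀ (norm_nonneg _) (hdmono m n hnm) 2)
      ⟨0, by rintro _ ⟨n, rfl⟩; positivity⟩
  have hL2le : ∀ n, (⨅ k, ‖x k - p k‖ ^ 2) ≤ ‖x n - p n‖ ^ 2 := fun n =>
    ciInf_le ⟨0, by rintro _ ⟨m, rfl⟩; positivity⟩ n
  have hpdiff : ∀ m n : ℕ, n ≤ m →
      ‖p m - p n‖ ^ 2 ≤ ‖x n - p n‖ ^ 2 - ‖x m - p m‖ ^ 2 := by
    intro m n hnm
    have hexp : ‖x m - p n‖ ^ 2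
        = ‖x m - p m‖ ^ 2 + 2 * ⟪x m - p m, p m - p n⟫ + ‖p m - p n‖ ^ 2 := by
      rw [show x m - p n = (x m - p m) + (p m - p n) by abel]
      exact norm_add_sq_real _ _
    have hin : 0 ≤ (⟪x m - p m, p m - p n⟫ : ℝ) := by
      have hch := hPchar (x m) (p n) (hPK (x n))
      rw [show p n - p m = -(p m - p n) from (neg_sub _ _).symm, inner_neg_right] at hch
      linarith
    have hF : ‖x m - p n‖ ≤ ‖x n - p n‖ := hFejer (p n) (hPK (x n)) m n hnm
    have hF2 : ‖x m - p n‖ ^ 2 ≤ ‖x n - p n‖ ^ 2 := pow_le_pow_left₀ (norm_nonneg _) hF 2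
    linarith
  have hcauchy : CauchySeq p := by
    apply cauchySeq_of_le_tendsto_0
      (fun N => 2 * Real.sqrt (‖x N - p N‖ ^ 2 - ⨅ k, ‖x k - p k‖ ^ 2))
    · intro n m N hn hm
      have bound : ∀ k, N ≤ k →
          ‖p k - p N‖ ≤ Real.sqrt (‖x N - p N‖ ^ 2 - ⨅ j, ‖x j - p j‖ ^ 2) := by
        intro k hk
        have h1 := hpdiff k N hk
        have h2 : ‖p k - p N‖ ^ 2 ≤ ‖x N - p N‖ ^ 2 - ⨅ j, ‖x j - p j‖ ^ 2 := by
          have := hL2le k; linarith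
        calc ‖p k - p N‖ = Real.sqrt (‖p k - p N‖ ^ 2) :=
              (Real.sqrt_sq (norm_nonneg _)).symm
        _ ≤ _ := Real.sqrt_le_sqrt h2
      calc dist (p n) (p m) ≤ dist (p n) (p N) + dist (p N) (p m) := dist_triangle _ _ _
      _ = ‖p n - p N‖ + ‖p m - p N‖ := by
          rw [dist_eq_norm, dist_comm (p N) (p m), dist_eq_norm]
      _ ≤ _ := by linarith [bound n hn, bound m hm]
    · have hsub : Tendsto (fun N => ‖x N - p N‖ ^ 2 - ⨅ k, ‖x k - p k‖ ^ 2) atTop (𝓝 0) := by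
        have := hd2.sub (tendsto_const_nhds (x := ⨅ k, ‖x k - p k‖ ^ 2) (f := (atTop : Filter ℕ)))
        simpa using this
      have := hsub.sqrt
      rw [Real.sqrt_zero] at this
      have h2 := this.const_mul 2
      rw [mul_zero] at h2
      exact h2
  obtain ⟨pl, hpl⟩ := cauchySeq_tendsto_of_complete hcauchy
  have hplK : pl ∈ K := hKcl.mem_of_tendsto hpl (Eventually.of_forall fun n => hPK (x n))
  have hveq : v₀ = pl := by
    have hg : ∀ n, (⟪x n - p n, v₀ - p n⟫ : ℝ) ≤ 0 := fun n => hPchar (x n) v₀ hv₀K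
    have hglim : Tendsto (fun n => (⟪x n - p n, v₀ - p n⟫ : ℝ)) atTop
        (𝓝 ⟪v₀ - pl, v₀ - pl⟫) := by
      have hxp : Tendsto (fun n => (⟪x n, v₀ - pl⟫ : ℝ)) atTop (𝓝 ⟪v₀, v₀ - pl⟫) := hweak _
      have hpp : Tendsto (fun n => (⟪p n, v₀ - pl⟫ : ℝ)) atTop (𝓝 ⟪pl, v₀ - pl⟫) :=
        hpl.inner tendsto_const_nhds
      have h3 : Tendsto (fun n => (⟪x n - p n, pl - p n⟫ : ℝ)) atTop (𝓝 0) := by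
        have hplp : Tendsto (fun n => ‖pl - p n‖) atTop (𝓝 0) := by
          have := (tendsto_const_nhds (x := pl) (f := (atTop : Filter ℕ))).sub hpl
          have h4 := this.norm
          rw [sub_self, norm_zero] at h4
          exact h4
        have hb := hplp.const_mul ‖x 0 - p 0‖
        rw [mul_zero] at hb
        apply squeeze_zero_norm _ hb
        intro n
        refine le_trans (abs_real_inner_le_norm _ _) ?_
        exact mul_le_mul_of_nonneg_right (hdmono n 0 (Nat.zero_le n)) (norm_nonneg _)
      have hcomb := (hxp.sub hpp).add h3
      rw [add_zero] at hcomb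
      have hval : (⟪v₀, v₀ - pl⟫ : ℝ) - ⟪pl, v₀ - pl⟫ = ⟪v₀ - pl, v₀ - pl⟫ :=
        (inner_sub_left _ _ _).symm
      rw [hval] at hcomb
      refine hcomb.congr fun n => ?_
      simp only [inner_sub_left, inner_sub_right]
      ring
    have hle := le_of_tendsto hglim (Eventually.of_forall hg)
    have h5 : v₀ - pl = 0 := by rwa [real_inner_self_nonpos] at hle
    rw [sub_eq_zero] at h5
    exact h5
  refine ⟨v₀, hv₀K, hweak, p, fun n => ⟨hPK (x n), fun w hw => hPle (x n) w hw⟩, ?_⟩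
  rw [hveq]
  exact hpl
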